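/- Assume that d_{1,-1}, d_{1,0}, d_{1,1} are not all zero, d_{-1,-1}, d_{-1,0}, d_{-1,1} are not all zero, d_{-1,1}, d_{0,1}, d_{1,1} are not all zero, and d_{-1,-1}, d_{0,-1}, d_{1,-1} are not all zero (so that K(x,y,t) has degree 2 and valuation 0 in each of x and y). If K(x,y,t) = -f₁(x,y)·f₂(x,y) with f₁, f₂ ∈ ℂ[x,y] nonconstant, then f₁ and f₂ each have degree exactly 1 in x and degree exactly 1 in y. -/

import Mathlib

namespace WalkFactorAux

open MvPolynomial

/-- Transcendence of `t` over the closure subfield, transferred to `ℂ`. -/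
lemma trans_complex (S : Set ℝ) (t : ℝ)
    (H : ∀ p : Polynomial ℝ, (∀ n, p.coeff n ∈ Subfield.closure S) → Polynomial.eval t p = 0 → p = 0) :
    letI : Algebra (Subfield.closure S) ℂ :=
      ((algebraMap ℝ ℂ).comp (algebraMap (Subfield.closure S) ℝ)).toAlgebra
    ¬ IsIntegral (Subfield.closure S) ((t : ℂ)) := by
  letI : Algebra (Subfield.closure S) ℂ :=
      ((algebraMap ℝ ℂ).comp (algebraMap (Subfield.closure S) ℝ)).toAlgebra
  intro hint
  obtain ⟨P, hP0, hPt⟩ := hint.isAlgebraic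
  set Q := P.map (algebraMap (Subfield.closure S) ℝ) with hQ
  have hQc : ∀ n, Q.coeff n ∈ Subfield.closure S := by
    intro n
    rw [hQ, Polynomial.coeff_map]
    exact (P.coeff n).2
  have hmap : algebraMap (Subfield.closure S) ℂ =
      (algebraMap ℝ ℂ).comp (algebraMap (Subfield.closure S) ℝ) := rfl
  have hQt : Polynomial.eval t Q = 0 := by
    have h1 : Polynomial.aeval ((t:ℝ):ℂ) P = ((Polynomial.eval t Q : ℝ) : ℂ) := by
      rw [Polynomial.aeval_def, hmap, ← Polynomial.eval₂_map, ← hQ,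
        show ((t:ℝ):ℂ) = algebraMap ℝ ℂ t from rfl, Polynomial.eval₂_at_apply]
      rfl
    have := hPt
    rw [h1] at this
    exact_mod_cast this
  have : Q = 0 := H Q hQc hQt
  have hinj : Function.Injective (algebraMap (Subfield.closure S) ℝ) :=
    Subtype.val_injective
  apply hP0
  apply Polynomial.map_injective _ hinj
  rw [← hQ, this, Polynomial.map_zero]

set_option maxHeartbeats 1000000 in
set_option synthInstance.maxHeartbeats 400000 in
/-- The core transcendence argument. -/
lemma core (S : Set ℝ) (t : ℝ)
    (H : ∀ p : Polynomial ℝ, (∀ n, p.coeff n ∈ Subfield.closure S) → Polynomial.eval t p = 0 → p = 0)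
    (p0 p1 p2 q0 q1 q2 r0 : ℝ)
    (hp0 : p0 ∈ S) (hp1 : p1 ∈ S) (hp2 : p2 ∈ S)
    (hq0 : q0 ∈ S) (hq1 : q1 ∈ S) (hq2 : q2 ∈ S)
    (hp : ¬ (p0 = 0 ∧ p1 = 0 ∧ p2 = 0))
    (h0 : ¬ (p0 = 0 ∧ q0 = 0 ∧ r0 = 0))
    (z : ℂ)
    (hA : (p0:ℂ) + p1*z + p2*z^2 = 0)
    (hB : z = (t:ℂ) * ((q0:ℂ) + q1*z + q2*z^2))
    (hCz : z = 0 → r0 = 0) : False := by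
  letI : Algebra (Subfield.closure S) ℂ :=
      ((algebraMap ℝ ℂ).comp (algebraMap (Subfield.closure S) ℝ)).toAlgebra
  have hmapF : ∀ (x : ℝ) (hx : x ∈ Subfield.closure S),
      algebraMap (Subfield.closure S) ℂ ⟨x, hx⟩ = (x : ℂ) := fun x hx => rfl
  have memF : ∀ x ∈ S, x ∈ Subfield.closure S := fun x hx => Subfield.subset_closure hx
  have hz : IsIntegral (Subfield.closure S) z := by
    rw [← isAlgebraic_iff_isIntegral]
    refine ⟨Polynomial.C ⟨p2, memF _ hp2⟩ * Polynomial.X ^ 2 +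
      Polynomial.C ⟨p1, memF _ hp1⟩ * Polynomial.X + Polynomial.C ⟨p0, memF _ hp0⟩, ?_, ?_⟩
    · intro hzero
      apply hp
      have c0 := congrArg (fun q => Polynomial.coeff q 0) hzero
      have c1 := congrArg (fun q => Polynomial.coeff q 1) hzero
      have c2 := congrArg (fun q => Polynomial.coeff q 2) hzero
      simp only [Polynomial.coeff_add, Polynomial.coeff_C_mul, Polynomial.coeff_X_pow,
        Polynomial.coeff_C, Polynomial.coeff_zero, Polynomial.coeff_X] at c0 c1 c2
      norm_num [Subtype.ext_iff] at c0 c1 c2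
      exact ⟨c0, c1, c2⟩
    · simp only [map_add, map_mul, map_pow, Polynomial.aeval_C, Polynomial.aeval_X, hmapF]
      linear_combination hA
  have hqint : IsIntegral (Subfield.closure S) ((q0:ℂ) + q1*z + q2*z^2) := by
    have h0' : IsIntegral (Subfield.closure S) ((q0:ℂ)) := by
      rw [← hmapF q0 (memF _ hq0)]; exact isIntegral_algebraMap
    have h1' : IsIntegral (Subfield.closure S) ((q1:ℂ)) := by
      rw [← hmapF q1 (memF _ hq1)]; exact isIntegral_algebraMap
    have h2' : IsIntegral (Subfield.closure S) ((q2:ℂ)) := by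
      rw [← hmapF q2 (memF _ hq2)]; exact isIntegral_algebraMap
    exact (h0'.add (h1'.mul hz)).add (h2'.mul (hz.pow 2))
  by_cases hBz : ((q0:ℂ) + q1*z + q2*z^2) = 0
  · have hz0 : z = 0 := by rw [hB, hBz, mul_zero]
    apply h0
    refine ⟨?_, ?_, hCz hz0⟩
    · have : (p0 : ℂ) = 0 := by rw [hz0] at hA; simpa using hA
      exact_mod_cast this
    · have : (q0 : ℂ) = 0 := by rw [hz0] at hBz; simpa using hBz
      exact_mod_cast this
  · have ht : ((t:ℝ):ℂ) = z / ((q0:ℂ) + q1*z + q2*z^2) := by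
      rw [eq_div_iff hBz]; linear_combination -hB
    have : IsIntegral (Subfield.closure S) ((t:ℝ):ℂ) := by
      rw [ht, div_eq_mul_inv]; exact hz.mul hqint.inv
    exact trans_complex S t H this

/-- A nonconstant polynomial with x-degree 0 has, for some `y0`, all values `f(x,y0) = 0`. -/
lemma exists_y0 (f : MvPolynomial (Fin 2) ℂ) (h0 : degreeOf 0 f = 0) (h1 : f.totalDegree ≠ 0) :
    ∃ y0 : ℂ, ∀ x : ℂ, MvPolynomial.eval ![x, y0] f = 0 := by
  have hsupp : ∀ m ∈ f.support, m 0 = 0 := by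
    intro m hm
    have := MvPolynomial.monomial_le_degreeOf 0 hm
    omega
  have hf0 : f ≠ 0 := fun h => h1 (by simp [h])
  obtain ⟨m, hm, hmdeg⟩ := Finset.exists_mem_eq_sup f.support
    (MvPolynomial.support_nonempty.mpr hf0) (fun m => m.sum fun _ e => e)
  have hm1 : 1 ≤ m 1 := by
    by_contra hc
    apply h1
    rw [MvPolynomial.totalDegree, hmdeg]
    have hm0 := hsupp m hm
    have : m.sum (fun _ e => e) = m 0 + m 1 := by
      rw [Finsupp.sum_fintype _ _ (fun _ => rfl), Fin.sum_univ_two]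
    omega
  have hmsingle : ∀ m' ∈ f.support, m' = Finsupp.single 1 (m' 1) := by
    intro m' hm'
    ext i
    match i with
    | ⟨0, _⟩ => simp [Finsupp.single_apply, hsupp m' hm']
    | ⟨1, _⟩ => simp [Finsupp.single_apply]
  set g : Polynomial ℂ := ∑ m' ∈ f.support, Polynomial.C (MvPolynomial.coeff m' f) *
      Polynomial.X ^ (m' 1) with hg
  have hgeval : ∀ x y : ℂ, MvPolynomial.eval ![x, y] f = g.eval y := by
    intro x y
    rw [MvPolynomial.eval_eq', hg]
    simp only [Polynomial.eval_finset_sum, Polynomial.eval_mul, Polynomial.eval_C,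
      Polynomial.eval_pow, Polynomial.eval_X]
    refine Finset.sum_congr rfl (fun m' hm' => ?_)
    rw [Fin.prod_univ_two]
    simp [hsupp m' hm', Matrix.cons_val_zero, Matrix.cons_val_one]
  have hgcoeff : g.coeff (m 1) = MvPolynomial.coeff m f := by
    rw [hg, Polynomial.finset_sum_coeff]
    rw [Finset.sum_eq_single m]
    · simp
    · intro m' hm' hne
      have : m' 1 ≠ m 1 := by
        intro he
        apply hne
        rw [hmsingle m' hm', he, ← hmsingle m hm]
      simp only [Polynomial.coeff_C_mul, Polynomial.coeff_X_pow]
      rw [if_neg (Ne.symm this), mul_zero]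
    · intro h; exact absurd hm h
  have hgne : g.coeff (m 1) ≠ 0 := by
    rw [hgcoeff]; exact MvPolynomial.mem_support_iff.mp hm
  have hdeg : 0 < g.degree := by
    have h1le : ((m 1 : ℕ) : WithBot ℕ) ≤ g.degree := Polynomial.le_degree_of_ne_zero hgne
    refine lt_of_lt_of_le ?_ h1le
    exact_mod_cast Nat.lt_of_lt_of_le Nat.zero_lt_one hm1
  obtain ⟨y0, hy0⟩ := Complex.exists_root hdeg
  exact ⟨y0, fun x => by rw [hgeval x y0]; exact hy0⟩

end WalkFactorAux



open MvPolynomial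

noncomputable section

variable (d : ℤ → ℤ → ℝ) (t : ℝ)

/-- The kernel polynomial `K(x,y,t) = xy(1 - t·Σ_{(i,j)∈{-1,0,1}²} d_{i,j} x^i y^j)`
as an element of `ℂ[x,y] = MvPolynomial (Fin 2) ℂ` (variable `0` is `x`, variable `1` is `y`). -/
def kernelK : MvPolynomial (Fin 2) ℂ :=
  X 0 * X 1 - C ((t : ℝ) : ℂ) *
    ∑ i ∈ Finset.range 3, ∑ j ∈ Finset.range 3,
      C ((d ((i : ℤ) - 1) ((j : ℤ) - 1) : ℝ) : ℂ) * X 0 ^ i * X 1 ^ j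

/-- The standing hypotheses: the weights `d_{i,j}` for `(i,j) ∈ {-1,0,1}²` lie in `[0,1]`
and sum to `1`, `t ∈ (0,1)`, and `t` is transcendental over `ℚ(d_{i,j})`, i.e. no nonzero
polynomial with coefficients in the subfield of `ℝ` generated by the `d_{i,j}` vanishes at `t`. -/
def WalkHyp : Prop :=
  (∀ i ∈ ({-1, 0, 1} : Set ℤ), ∀ j ∈ ({-1, 0, 1} : Set ℤ), 0 ≤ d i j ∧ d i j ≤ 1) ∧
  (∑ i ∈ ({-1, 0, 1} : Finset ℤ), ∑ j ∈ ({-1, 0, 1} : Finset ℤ), d i j = 1) ∧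
  (0 < t ∧ t < 1) ∧
  (∀ p : Polynomial ℝ,
      (∀ n, p.coeff n ∈
        Subfield.closure
          {x : ℝ | ∃ i ∈ ({-1, 0, 1} : Set ℤ), ∃ j ∈ ({-1, 0, 1} : Set ℤ), x = d i j}) →
      Polynomial.eval t p = 0 → p = 0)

/-- The model is degenerate if `K` is reducible in `ℂ[x,y]`, or has degree `≤ 1` in `x`,
or degree `≤ 1` in `y`. -/
def Degenerate : Prop :=
  ¬ Irreducible (kernelK d t) ∨
    degreeOf 0 (kernelK d t) ≤ 1 ∨ degreeOf 1 (kernelK d t) ≤ 1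

/-- The bihomogenized kernel
`K̄(x₀,x₁,y₀,y₁) = x₀x₁y₀y₁ - t Σ_{i,j=0}^{2} d_{i-1,j-1} x₀^i x₁^{2-i} y₀^j y₁^{2-j}`,
with variables `0 ↦ x₀`, `1 ↦ x₁`, `2 ↦ y₀`, `3 ↦ y₁`. -/
def kernelKbar : MvPolynomial (Fin 4) ℂ :=
  X 0 * X 1 * X 2 * X 3 - C ((t : ℝ) : ℂ) *
    ∑ i ∈ Finset.range 3, ∑ j ∈ Finset.range 3,
      C ((d ((i : ℤ) - 1) ((j : ℤ) - 1) : ℝ) : ℂ) *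
        X 0 ^ i * X 1 ^ (2 - i) * X 2 ^ j * X 3 ^ (2 - j)

/-- `([a:b],[c:e])` lies on the kernel curve `Ē_t ⊆ ℙ¹(ℂ)×ℙ¹(ℂ)`. -/
def OnKernelCurve (a b c e : ℂ) : Prop :=
  eval ![a, b, c, e] (kernelKbar d t) = 0

/-- `([a:b],[c:e])` is a singular point of the kernel curve `Ē_t`: it lies on `Ē_t`
and all four partial derivatives of `K̄` vanish there. -/
def SingularAt (a b c e : ℂ) : Prop :=
  OnKernelCurve d t a b c e ∧
    ∀ k : Fin 4, eval ![a, b, c, e] (pderiv k (kernelKbar d t)) = 0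

/-- `Ā₁(x₀,x₁)`: the coefficient of `y₀²` in `K̄`. -/
def Abar1 : MvPolynomial (Fin 2) ℂ :=
  -(C ((t : ℝ) : ℂ)) *
    (C ((d (-1) 1 : ℝ) : ℂ) * X 1 ^ 2 + C ((d 0 1 : ℝ) : ℂ) * X 0 * X 1 +
      C ((d 1 1 : ℝ) : ℂ) * X 0 ^ 2)

/-- `B̄₁(x₀,x₁)`: the coefficient of `y₀y₁` in `K̄`. -/
def Bbar1 : MvPolynomial (Fin 2) ℂ :=
  X 0 * X 1 - C ((t : ℝ) : ℂ) *
    (C ((d (-1) 0 : ℝ) : ℂ) * X 1 ^ 2 + C ((d 0 0 : ℝ) : ℂ) * X 0 * X 1 +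
      C ((d 1 0 : ℝ) : ℂ) * X 0 ^ 2)

/-- `C̄₁(x₀,x₁)`: the coefficient of `y₁²` in `K̄`. -/
def Cbar1 : MvPolynomial (Fin 2) ℂ :=
  -(C ((t : ℝ) : ℂ)) *
    (C ((d (-1) (-1) : ℝ) : ℂ) * X 1 ^ 2 + C ((d 0 (-1) : ℝ) : ℂ) * X 0 * X 1 +
      C ((d 1 (-1) : ℝ) : ℂ) * X 0 ^ 2)

/-- The discriminant `Δ₁(x₀,x₁) = B̄₁² - 4Ā₁C̄₁`, homogeneous of degree 4. -/
def Delta1 : MvPolynomial (Fin 2) ℂ :=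
  Bbar1 d t ^ 2 - 4 * Abar1 d t * Cbar1 d t

/-- `Ā₂(y₀,y₁)`: the coefficient of `x₀²` in `K̄`. -/
def Abar2 : MvPolynomial (Fin 2) ℂ :=
  -(C ((t : ℝ) : ℂ)) *
    (C ((d 1 (-1) : ℝ) : ℂ) * X 1 ^ 2 + C ((d 1 0 : ℝ) : ℂ) * X 0 * X 1 +
      C ((d 1 1 : ℝ) : ℂ) * X 0 ^ 2)

/-- `B̄₂(y₀,y₁)`: the coefficient of `x₀x₁` in `K̄`. -/
def Bbar2 : MvPolynomial (Fin 2) ℂ :=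
  X 0 * X 1 - C ((t : ℝ) : ℂ) *
    (C ((d 0 (-1) : ℝ) : ℂ) * X 1 ^ 2 + C ((d 0 0 : ℝ) : ℂ) * X 0 * X 1 +
      C ((d 0 1 : ℝ) : ℂ) * X 0 ^ 2)

/-- `C̄₂(y₀,y₁)`: the coefficient of `x₁²` in `K̄`. -/
def Cbar2 : MvPolynomial (Fin 2) ℂ :=
  -(C ((t : ℝ) : ℂ)) *
    (C ((d (-1) (-1) : ℝ) : ℂ) * X 1 ^ 2 + C ((d (-1) 0 : ℝ) : ℂ) * X 0 * X 1 +
      C ((d (-1) 1 : ℝ) : ℂ) * X 0 ^ 2)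

/-- The discriminant `Δ₂(y₀,y₁) = B̄₂² - 4Ā₂C̄₂`, homogeneous of degree 4. -/
def Delta2 : MvPolynomial (Fin 2) ℂ :=
  Bbar2 d t ^ 2 - 4 * Abar2 d t * Cbar2 d t

/-- `[a:b] ∈ ℙ¹(ℂ)` is a double root of the homogeneous polynomial `p`:
`(bX - aY)²` divides `p(X,Y)`. -/
def IsDoubleRootAt (a b : ℂ) (p : MvPolynomial (Fin 2) ℂ) : Prop :=
  (C b * X 0 - C a * X 1) ^ 2 ∣ p

/-- The step set of the model is included in a closed half plane whose boundary passes
through the origin. -/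
def StepSetInHalfPlane : Prop :=
  ∃ u v : ℝ, (u, v) ≠ (0, 0) ∧
    ∀ i ∈ ({-1, 0, 1} : Set ℤ), ∀ j ∈ ({-1, 0, 1} : Set ℤ),
      (i, j) ≠ (0, 0) → d i j ≠ 0 → 0 ≤ u * (i : ℝ) + v * (j : ℝ)

/-- `α₂ = β₂` for the first family of (G0). -/
def alpha2 : ℝ := 1 - 2*t*(d 0 0) + t^2*(d 0 0)^2 - 4*t^2*(d (-1) 1)*(d 1 (-1))

/-- `α₃` for the first family of (G0). -/
def alpha3 : ℝ := 2*t^2*(d 1 0)*(d 0 0) - 2*t*(d 1 0) - 4*t^2*(d 0 1)*(d 1 (-1))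

/-- `α₄` for the first family of (G0). -/
def alpha4 : ℝ := t^2*((d 1 0)^2 - 4*(d 1 1)*(d 1 (-1)))

/-- `β₃` for the first family of (G0). -/
def beta3 : ℝ := 2*t^2*(d 0 1)*(d 0 0) - 2*t*(d 0 1) - 4*t^2*(d 1 0)*(d (-1) 1)

/-- `β₄` for the first family of (G0). -/
def beta4 : ℝ := t^2*((d 0 1)^2 - 4*(d 1 1)*(d (-1) 1))

/-- The kernel polynomial as a function `ℂ × ℂ → ℂ`:
`K(x,y,t) = xy - t Σ_{i,j=0}^{2} d_{i-1,j-1} x^i y^j`. -/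
def kernelKfun (x y : ℂ) : ℂ :=
  x * y - ((t : ℝ) : ℂ) *
    ∑ i ∈ Finset.range 3, ∑ j ∈ Finset.range 3,
      ((d ((i : ℤ) - 1) ((j : ℤ) - 1) : ℝ) : ℂ) * x ^ i * y ^ j

lemma eval_kernelK (x y : ℂ) :
    MvPolynomial.eval ![x, y] (kernelK d t) =
      x * y - (t:ℂ) * (((d (-1) (-1) : ℝ) : ℂ) + (d (-1) 0 : ℝ) * y + (d (-1) 1 : ℝ) * y^2
        + (((d 0 (-1) : ℝ) : ℂ) + (d 0 0 : ℝ) * y + (d 0 1 : ℝ) * y^2) * x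
        + (((d 1 (-1) : ℝ) : ℂ) + (d 1 0 : ℝ) * y + (d 1 1 : ℝ) * y^2) * x^2) := by
  simp only [kernelK, Finset.sum_range_succ, Finset.sum_range_zero]
  simp only [map_sub, map_mul, map_add, map_pow, MvPolynomial.eval_C, MvPolynomial.eval_X,
    map_zero, zero_add, Matrix.cons_val_zero, Matrix.cons_val_one, Matrix.head_cons]
  norm_num only [Nat.cast_ofNat, Nat.cast_one, Nat.cast_zero]
  ring

lemma degX_kernelK_le : degreeOf 0 (kernelK d t) ≤ 2 := by
  refine le_trans (degreeOf_sub_le _ _ _) ?_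
  simp only [max_le_iff]
  constructor
  · refine le_trans (degreeOf_mul_le _ _ _) ?_
    rw [degreeOf_X, degreeOf_X]
    norm_num
  · refine le_trans (degreeOf_mul_le _ _ _) ?_
    rw [degreeOf_C]
    refine le_trans (by exact le_refl _) ?_
    simp only [zero_add]
    refine le_trans (degreeOf_sum_le _ _ _) ?_
    rw [Finset.sup_le_iff]
    intro i hi
    refine le_trans (degreeOf_sum_le _ _ _) ?_
    rw [Finset.sup_le_iff]
    intro j hj
    refine le_trans (degreeOf_mul_le _ _ _) ?_
    have h1 : degreeOf 0 (C ((d ((i : ℤ) - 1) ((j : ℤ) - 1) : ℝ) : ℂ) * X 0 ^ i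
        : MvPolynomial (Fin 2) ℂ) ≤ i := by
      refine le_trans (degreeOf_mul_le _ _ _) ?_
      rw [degreeOf_C, zero_add]
      refine le_trans (degreeOf_pow_le _ _ _) ?_
      rw [degreeOf_X]
      simp
    have h2 : degreeOf 0 (X 1 ^ j : MvPolynomial (Fin 2) ℂ) = 0 := by
      refine Nat.le_zero.mp (le_trans (degreeOf_pow_le _ _ _) ?_)
      rw [degreeOf_X]
      simp
    rw [h2]
    simp only [Finset.mem_range] at hi
    omega

lemma degX_mul (f g : MvPolynomial (Fin 2) ℂ) (hf : f ≠ 0) (hg : g ≠ 0) :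
    degreeOf 0 (f * g) = degreeOf 0 f + degreeOf 0 g := by
  rw [← natDegree_finSuccEquiv, ← natDegree_finSuccEquiv, ← natDegree_finSuccEquiv, map_mul]
  exact Polynomial.natDegree_mul
    ((map_ne_zero_iff _ (AlgEquiv.injective _)).mpr hf)
    ((map_ne_zero_iff _ (AlgEquiv.injective _)).mpr hg)

lemma rename_swap_kernelK :
    rename (Equiv.swap (0 : Fin 2) 1) (kernelK d t) = kernelK (fun i j => d j i) t := by
  simp only [kernelK, Finset.sum_range_succ, Finset.sum_range_zero, zero_add, map_sub, map_mul,
    map_add, map_zero, map_pow, rename_C, rename_X, Equiv.swap_apply_left, Equiv.swap_apply_right]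
  ring

lemma totalDegree_rename_swap (f : MvPolynomial (Fin 2) ℂ) :
    (rename (Equiv.swap (0 : Fin 2) 1) f).totalDegree = f.totalDegree := by
  refine le_antisymm (totalDegree_rename_le _ _) ?_
  have : f = rename (Equiv.swap (0 : Fin 2) 1) (rename (Equiv.swap (0 : Fin 2) 1) f) := by
    rw [rename_rename]
    have : (Equiv.swap (0 : Fin 2) 1) ∘ (Equiv.swap (0 : Fin 2) 1) = id := by
      funext a; simp [Equiv.swap_apply_self]
    rw [this, rename_id, AlgHom.id_apply]
  conv_lhs => rw [this]
  exact totalDegree_rename_le _ _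

lemma degX_factors (h : WalkHyp d t)
    (hx2 : ¬ (d 1 (-1) = 0 ∧ d 1 0 = 0 ∧ d 1 1 = 0))
    (hy0 : ¬ (d (-1) (-1) = 0 ∧ d 0 (-1) = 0 ∧ d 1 (-1) = 0))
    (f₁ f₂ : MvPolynomial (Fin 2) ℂ)
    (hf₁ : f₁.totalDegree ≠ 0) (hf₂ : f₂.totalDegree ≠ 0)
    (hK : kernelK d t = -(f₁ * f₂)) :
    degreeOf 0 f₁ = 1 ∧ degreeOf 0 f₂ = 1 := by
  obtain ⟨hbd, hsum1, ⟨htpos, htlt⟩, htr⟩ := h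
  have ht0 : ((t:ℝ):ℂ) ≠ 0 := by
    simp only [ne_eq, Complex.ofReal_eq_zero]
    exact ne_of_gt htpos
  have key : ∀ g g' : MvPolynomial (Fin 2) ℂ, g.totalDegree ≠ 0 →
      kernelK d t = -(g * g') → degreeOf 0 g ≠ 0 := by
    intro g g' hg hKg hdeg0
    obtain ⟨y0, hy0v⟩ := WalkFactorAux.exists_y0 g hdeg0 hg
    have hKy : ∀ x : ℂ, MvPolynomial.eval ![x, y0] (kernelK d t) = 0 := by
      intro x
      rw [hKg, map_neg, map_mul, hy0v x, zero_mul, neg_zero]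
    have e0 := hKy 0
    have e1 := hKy 1
    have em := hKy (-1)
    rw [eval_kernelK] at e0 e1 em
    have hA' : ((t:ℝ):ℂ) * (((d 1 (-1) : ℝ):ℂ) + (d 1 0 : ℝ) * y0 + (d 1 1 : ℝ) * y0^2) = 0 := by
      linear_combination (-(1:ℂ)/2) * e1 + (-(1:ℂ)/2) * em + e0
    have hA : ((d 1 (-1) : ℝ):ℂ) + (d 1 0 : ℝ) * y0 + (d 1 1 : ℝ) * y0^2 = 0 :=
      (mul_eq_zero.mp hA').resolve_left ht0
    have hB : y0 = ((t:ℝ):ℂ) * (((d 0 (-1) : ℝ):ℂ) + (d 0 0 : ℝ) * y0 + (d 0 1 : ℝ) * y0^2) := by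
      linear_combination ((1:ℂ)/2) * e1 + (-(1:ℂ)/2) * em
    have hC' : ((t:ℝ):ℂ) * ((d (-1) (-1) : ℝ):ℂ) + ((t:ℝ):ℂ) * ((d (-1) 0 : ℝ) * y0)
        + ((t:ℝ):ℂ) * ((d (-1) 1 : ℝ) * y0^2) = 0 := by
      linear_combination -e0
    have hCz : y0 = 0 → d (-1) (-1) = 0 := by
      intro hyz
      rw [hyz] at hC'
      have : ((d (-1) (-1) : ℝ):ℂ) = 0 := by
        have h2 := mul_eq_zero.mp (by linear_combination hC' :
          ((t:ℝ):ℂ) * ((d (-1) (-1) : ℝ):ℂ) = 0)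
        exact h2.resolve_left ht0
      exact_mod_cast this
    have hmem : ∀ i ∈ ({-1, 0, 1} : Set ℤ), ∀ j ∈ ({-1, 0, 1} : Set ℤ),
        d i j ∈ {x : ℝ | ∃ i ∈ ({-1, 0, 1} : Set ℤ), ∃ j ∈ ({-1, 0, 1} : Set ℤ), x = d i j} :=
      fun i hi j hj => ⟨i, hi, j, hj, rfl⟩
    have m1 : (1 : ℤ) ∈ ({-1, 0, 1} : Set ℤ) := by norm_num
    have m0 : (0 : ℤ) ∈ ({-1, 0, 1} : Set ℤ) := by norm_num
    have mm : (-1 : ℤ) ∈ ({-1, 0, 1} : Set ℤ) := by norm_num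
    exact WalkFactorAux.core _ t htr (d 1 (-1)) (d 1 0) (d 1 1) (d 0 (-1)) (d 0 0) (d 0 1)
      (d (-1) (-1)) (hmem 1 m1 (-1) mm) (hmem 1 m1 0 m0) (hmem 1 m1 1 m1)
      (hmem 0 m0 (-1) mm) (hmem 0 m0 0 m0) (hmem 0 m0 1 m1)
      hx2 (fun ⟨a, b, c⟩ => hy0 ⟨c, b, a⟩) y0 hA hB hCz
  have hf₁0 : f₁ ≠ 0 := fun hh => hf₁ (by simp [hh])
  have hf₂0 : f₂ ≠ 0 := fun hh => hf₂ (by simp [hh])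
  have h1 : degreeOf 0 f₁ ≠ 0 := key f₁ f₂ hf₁ hK
  have h2 : degreeOf 0 f₂ ≠ 0 := key f₂ f₁ hf₂ (by rw [hK, mul_comm])
  have hsum : degreeOf 0 f₁ + degreeOf 0 f₂ ≤ 2 := by
    rw [← degX_mul f₁ f₂ hf₁0 hf₂0]
    have hle := degX_kernelK_le d t
    rw [hK, degreeOf_neg] at hle
    exact hle
  omega

/-- if the weights along each of the four boundary lines are not all zero
and `K = -f₁·f₂` with `f₁, f₂` nonconstant, then `f₁` and `f₂` each have degree
exactly `1` in `x` and degree exactly `1` in `y`. -/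
theorem factors_have_bidegree_one (h : WalkHyp d t)
    (hx2 : ¬ (d 1 (-1) = 0 ∧ d 1 0 = 0 ∧ d 1 1 = 0))
    (hx0 : ¬ (d (-1) (-1) = 0 ∧ d (-1) 0 = 0 ∧ d (-1) 1 = 0))
    (hy2 : ¬ (d (-1) 1 = 0 ∧ d 0 1 = 0 ∧ d 1 1 = 0))
    (hy0 : ¬ (d (-1) (-1) = 0 ∧ d 0 (-1) = 0 ∧ d 1 (-1) = 0))
    (f₁ f₂ : MvPolynomial (Fin 2) ℂ)
    (hf₁ : f₁.totalDegree ≠ 0) (hf₂ : f₂.totalDegree ≠ 0)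
    (hK : kernelK d t = -(f₁ * f₂)) :
    degreeOf 0 f₁ = 1 ∧ degreeOf 1 f₁ = 1 ∧ degreeOf 0 f₂ = 1 ∧ degreeOf 1 f₂ = 1 := by
  obtain ⟨hx₁, hx₂⟩ := degX_factors d t h hx2 hy0 f₁ f₂ hf₁ hf₂ hK
  -- transpose the model
  set d' : ℤ → ℤ → ℝ := fun i j => d j i with hd'
  have hset : {x : ℝ | ∃ i ∈ ({-1, 0, 1} : Set ℤ), ∃ j ∈ ({-1, 0, 1} : Set ℤ), x = d' i j}
      = {x : ℝ | ∃ i ∈ ({-1, 0, 1} : Set ℤ), ∃ j ∈ ({-1, 0, 1} : Set ℤ), x = d i j} := by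
    ext x
    constructor <;> rintro ⟨i, hi, j, hj, rfl⟩ <;> exact ⟨j, hj, i, hi, rfl⟩
  have h' : WalkHyp d' t := by
    obtain ⟨hbd, hsum1, htt, htr⟩ := h
    refine ⟨fun i hi j hj => hbd j hj i hi, ?_, htt, ?_⟩
    · rw [Finset.sum_comm]
      exact hsum1
    · intro p hp hp0
      apply htr p ?_ hp0
      intro n
      have := hp n
      rwa [hset] at this
  have hσ : Function.Injective (Equiv.swap (0 : Fin 2) 1) := Equiv.injective _
  have hK' : kernelK d' t = -(rename (Equiv.swap (0 : Fin 2) 1) f₁ *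
      rename (Equiv.swap (0 : Fin 2) 1) f₂) := by
    rw [← rename_swap_kernelK d t, hK, map_neg, map_mul]
  have hf₁' : (rename (Equiv.swap (0 : Fin 2) 1) f₁).totalDegree ≠ 0 := by
    rw [totalDegree_rename_swap]; exact hf₁
  have hf₂' : (rename (Equiv.swap (0 : Fin 2) 1) f₂).totalDegree ≠ 0 := by
    rw [totalDegree_rename_swap]; exact hf₂
  have hx2' : ¬ (d' 1 (-1) = 0 ∧ d' 1 0 = 0 ∧ d' 1 1 = 0) := by
    simp only [hd']
    exact fun ⟨a, b, c⟩ => hy2 ⟨a, b, c⟩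
  have hy0' : ¬ (d' (-1) (-1) = 0 ∧ d' 0 (-1) = 0 ∧ d' 1 (-1) = 0) := by
    simp only [hd']
    exact fun ⟨a, b, c⟩ => hx0 ⟨a, b, c⟩
  obtain ⟨hy₁, hy₂⟩ := degX_factors d' t h' hx2' hy0'
    (rename (Equiv.swap (0 : Fin 2) 1) f₁) (rename (Equiv.swap (0 : Fin 2) 1) f₂)
    hf₁' hf₂' hK'
  have e₁ : degreeOf ((Equiv.swap (0 : Fin 2) 1) 1) (rename (Equiv.swap (0 : Fin 2) 1) f₁)
      = degreeOf 1 f₁ := degreeOf_rename_of_injective hσ 1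
  have e₂ : degreeOf ((Equiv.swap (0 : Fin 2) 1) 1) (rename (Equiv.swap (0 : Fin 2) 1) f₂)
      = degreeOf 1 f₂ := degreeOf_rename_of_injective hσ 1
  rw [Equiv.swap_apply_right] at e₁ e₂
  exact ⟨hx₁, by rw [← e₁]; exact hy₁, hx₂, by rw [← e₂]; exact hy₂⟩

end
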